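/- There is an absolute constant C > 0 such that for every positive integer d and every real t ≥ 2√d + 1, |E_{x∼N(0,1)}[x^d ∣ |x| ≤ t] − E_{x∼N(0,1)}[x^d]| ≤ C·t^d·e^{−t²/2}. -/

import Mathlib

open MeasureTheory ProbabilityTheory
open MeasureTheory ProbabilityTheory Real Set Filter Topology
open scoped ENNReal NNReal

lemma my_exp_int (b a : ℝ) (hb : 0 < b) :
    ∫ x in Ioi a, Real.exp (-(b * x)) = Real.exp (-(b * a)) / b := by
  have hderiv : ∀ x ∈ Ici a, HasDerivAt (fun x => -Real.exp (-(b * x)) / b)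
      (Real.exp (-(b * x))) x := by
    intro x _
    have h1 : HasDerivAt (fun x : ℝ => -(b * x)) (-b) x := by
      have h := ((hasDerivAt_id x).const_mul b).neg; rw [mul_one] at h; exact h
    have h2 := (h1.exp.neg).div_const b
    refine h2.congr_deriv ?_
    field_simp
  have hint : IntegrableOn (fun x => Real.exp (-(b * x))) (Ioi a) := by
    simpa [neg_mul] using exp_neg_integrableOn_Ioi a hb
  have htend : Tendsto (fun x => -Real.exp (-(b * x)) / b) atTop (𝓝 0) := by
    have h1 : Tendsto (fun x : ℝ => -(b * x)) atTop atBot := by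
      exact tendsto_neg_atBot_iff.mpr (tendsto_id.const_mul_atTop hb)
    have h2 := (Real.tendsto_exp_atBot.comp h1).neg.div_const b
    simpa using h2
  have := integral_Ioi_of_hasDerivAt_of_tendsto' hderiv hint htend
  rw [this]; field_simp; ring

lemma my_int_pow_gauss (d : ℕ) :
    Integrable (fun x : ℝ => x ^ d * Real.exp (-x ^ 2 / 2)) := by
  have h := integrable_rpow_mul_exp_neg_mul_sq (b := (2:ℝ)⁻¹) (by norm_num)
    (s := (d : ℝ)) (by exact lt_of_lt_of_le (by norm_num) (Nat.cast_nonneg d))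
  have he : (fun x : ℝ => x ^ d * Real.exp (-x ^ 2 / 2))
      = fun x : ℝ => x ^ (d : ℝ) * Real.exp (-(2:ℝ)⁻¹ * x ^ 2) := by
    funext x
    rw [Real.rpow_natCast]
    congr 1
    ring
  rw [he]; exact h

lemma my_int_abs_pow_gauss (d : ℕ) :
    Integrable (fun x : ℝ => |x| ^ d * Real.exp (-x ^ 2 / 2)) := by
  have := (my_int_pow_gauss d).abs
  simpa [abs_mul, abs_pow, abs_of_nonneg (Real.exp_pos _).le] using this

lemma my_core (d : ℕ) (t : ℝ) (ht1 : 1 ≤ t) (ht : 4 * d ≤ t ^ 2) :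
    ∫ x in Ioi t, |x| ^ d * Real.exp (-x ^ 2 / 2)
      ≤ 4 * (t ^ d * Real.exp (-t ^ 2 / 2)) := by
  have ht0 : (0:ℝ) < t := by linarith
  have hpt : ∀ x ∈ Ioi t, |x| ^ d * Real.exp (-x ^ 2 / 2)
      ≤ (t ^ d * Real.exp (-t ^ 2 / 4)) * Real.exp (-(t / 4 * x)) := by
    intro x hx
    have hx' : t < x := hx
    have hx0 : (0:ℝ) < x := lt_trans ht0 hx'
    rw [abs_of_pos hx0]
    have h1 : x ^ d ≤ t ^ d * Real.exp (t / 4 * (x - t)) := by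
      have ha : x / t ≤ Real.exp ((x - t) / t) := by
        have := Real.add_one_le_exp ((x - t) / t)
        have hxt : (x - t) / t + 1 = x / t := by field_simp; ring
        linarith
      have hb : (x / t) ^ d ≤ Real.exp ((x - t) / t) ^ d :=
        pow_le_pow_left₀ (by positivity) ha d
      have hc : Real.exp ((x - t) / t) ^ d = Real.exp (d * ((x - t) / t)) := by
        rw [← Real.exp_nat_mul]
      have hd' : Real.exp (d * ((x - t) / t)) ≤ Real.exp (t / 4 * (x - t)) := by
        apply Real.exp_le_exp.mpr
        have hxt : 0 ≤ x - t := by linarith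
        rw [mul_div_assoc']
        rw [div_le_iff₀ ht0]
        nlinarith
      have he : x ^ d = t ^ d * (x / t) ^ d := by
        rw [div_pow, mul_div_cancel₀ _ (pow_ne_zero d ht0.ne')]
      rw [he]
      have := le_trans (le_trans hb (le_of_eq hc)) hd'
      exact mul_le_mul_of_nonneg_left this (by positivity)
    have h2 : Real.exp (-x ^ 2 / 2) ≤ Real.exp (-(t / 2 * x)) := by
      apply Real.exp_le_exp.mpr
      nlinarith
    calc x ^ d * Real.exp (-x ^ 2 / 2)
        ≤ (t ^ d * Real.exp (t / 4 * (x - t))) * Real.exp (-(t / 2 * x)) := by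
          apply mul_le_mul h1 h2 (Real.exp_pos _).le (by positivity)
      _ = (t ^ d * Real.exp (-t ^ 2 / 4)) * Real.exp (-(t / 4 * x)) := by
          rw [mul_assoc, mul_assoc, ← Real.exp_add, ← Real.exp_add]
          congr 2
          ring
  have hintR : IntegrableOn (fun x => (t ^ d * Real.exp (-t ^ 2 / 4))
      * Real.exp (-(t / 4 * x))) (Ioi t) := by
    apply Integrable.const_mul
    simpa [neg_mul, IntegrableOn] using exp_neg_integrableOn_Ioi t (by positivity : (0:ℝ) < t / 4)
  have hintL : IntegrableOn (fun x : ℝ => |x| ^ d * Real.exp (-x ^ 2 / 2)) (Ioi t) :=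
    (my_int_abs_pow_gauss d).integrableOn
  calc ∫ x in Ioi t, |x| ^ d * Real.exp (-x ^ 2 / 2)
      ≤ ∫ x in Ioi t, (t ^ d * Real.exp (-t ^ 2 / 4)) * Real.exp (-(t / 4 * x)) :=
        setIntegral_mono_on hintL hintR measurableSet_Ioi hpt
    _ = (t ^ d * Real.exp (-t ^ 2 / 4)) * (Real.exp (-(t / 4 * t)) / (t / 4)) := by
        rw [MeasureTheory.integral_const_mul, my_exp_int _ _ (by positivity)]
    _ ≤ 4 * (t ^ d * Real.exp (-t ^ 2 / 2)) := by
        have he : Real.exp (-t ^ 2 / 4) * Real.exp (-(t / 4 * t)) = Real.exp (-t ^ 2 / 2) := by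
          rw [← Real.exp_add]; congr 1; ring
        have h4t : 4 / t ≤ 4 := by
          rw [div_le_iff₀ ht0]; nlinarith
        calc (t ^ d * Real.exp (-t ^ 2 / 4)) * (Real.exp (-(t / 4 * t)) / (t / 4))
            = (t ^ d * Real.exp (-t ^ 2 / 2)) * (4 / t) := by
              rw [mul_assoc, show Real.exp (-t ^ 2 / 4) * (Real.exp (-(t / 4 * t)) / (t / 4))
                  = (Real.exp (-t ^ 2 / 4) * Real.exp (-(t / 4 * t))) * (4 / t) from by
                field_simp, he]
              ring
          _ ≤ (t ^ d * Real.exp (-t ^ 2 / 2)) * 4 :=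
              mul_le_mul_of_nonneg_left h4t (by positivity)
          _ = 4 * (t ^ d * Real.exp (-t ^ 2 / 2)) := by ring

lemma my_tail (d : ℕ) (t : ℝ) (ht1 : 1 ≤ t) (ht : 4 * d ≤ t ^ 2) :
    ∫ x in {x : ℝ | t < |x|}, |x| ^ d * Real.exp (-x ^ 2 / 2)
      ≤ 8 * (t ^ d * Real.exp (-t ^ 2 / 2)) := by
  have hset : {x : ℝ | t < |x|} = Iio (-t) ∪ Ioi t := by
    ext x
    simp only [mem_setOf_eq, mem_union, mem_Iio, mem_Ioi, lt_abs]
    constructor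
    · rintro (h | h)
      · exact Or.inr h
      · exact Or.inl (by linarith)
    · rintro (h | h)
      · exact Or.inr (by linarith)
      · exact Or.inl h
  have hdisj : Disjoint (Iio (-t)) (Ioi t) :=
    (Iio_disjoint_Ici (by linarith)).mono_right Ioi_subset_Ici_self
  have hgint := my_int_abs_pow_gauss d
  rw [hset, setIntegral_union hdisj measurableSet_Ioi hgint.integrableOn hgint.integrableOn]
  have hneg : ∫ x in Iio (-t), |x| ^ d * Real.exp (-x ^ 2 / 2)
      = ∫ x in Ioi t, |x| ^ d * Real.exp (-x ^ 2 / 2) := by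
    rw [← integral_Iic_eq_integral_Iio, ← integral_comp_neg_Ioi]
    congr 1
    funext x
    simp [neg_pow, abs_neg, neg_sq]
  rw [hneg]
  have := my_core d t ht1 ht
  linarith

lemma my_gpdf_eq (x : ℝ) :
    gaussianPDFReal 0 1 x = (Real.sqrt (2 * Real.pi))⁻¹ * Real.exp (-x ^ 2 / 2) := by
  simp [gaussianPDFReal]

lemma my_K_le_one : (Real.sqrt (2 * Real.pi))⁻¹ ≤ 1 := by
  rw [inv_le_one_iff₀]
  right
  rw [show (1:ℝ) = Real.sqrt 1 by simp]
  apply Real.sqrt_le_sqrt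
  nlinarith [Real.pi_gt_three]

lemma my_conv (f : ℝ → ℝ) {s : Set ℝ} (hs : MeasurableSet s) :
    ∫ x in s, f x ∂(gaussianReal 0 1)
      = ∫ x in s, gaussianPDFReal 0 1 x * f x := by
  rw [gaussianReal_of_var_ne_zero 0 one_ne_zero]
  have : (gaussianPDF 0 1) = fun x => ((gaussianPDFReal 0 1 x).toNNReal : ℝ≥0∞) := rfl
  rw [this, setIntegral_withDensity_eq_setIntegral_smul
    (measurable_gaussianPDFReal 0 1).real_toNNReal f hs]
  congr 1
  funext x
  rw [NNReal.smul_def, smul_eq_mul, Real.coe_toNNReal _ (gaussianPDFReal_nonneg 0 1 x)]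

lemma my_int_mu (d : ℕ) : Integrable (fun x : ℝ => x ^ d) (gaussianReal 0 1) := by
  rw [gaussianReal_of_var_ne_zero 0 one_ne_zero]
  have : (gaussianPDF 0 1) = fun x => ((gaussianPDFReal 0 1 x).toNNReal : ℝ≥0∞) := rfl
  rw [this]
  rw [integrable_withDensity_iff_integrable_smul
    (measurable_gaussianPDFReal 0 1).real_toNNReal]
  have heq : (fun x : ℝ => ((gaussianPDFReal 0 1 x).toNNReal : ℝ≥0) • x ^ d)
      = fun x : ℝ => (Real.sqrt (2 * Real.pi))⁻¹ * (x ^ d * Real.exp (-x ^ 2 / 2)) := by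
    funext x
    rw [NNReal.smul_def, smul_eq_mul, Real.coe_toNNReal _ (gaussianPDFReal_nonneg 0 1 x),
      my_gpdf_eq]
    ring
  rw [heq]
  exact (my_int_pow_gauss d).const_mul _

/-- **Truncation does not change one-dimensional Gaussian moments much.**
There is an absolute constant `C > 0` such that for every positive integer `d` and every real
`t ≥ 2√d + 1`, `|E_{x∼N(0,1)}[x^d ∣ |x| ≤ t] − E_{x∼N(0,1)}[x^d]| ≤ C · t^d · e^{−t²/2}`.
The conditional expectation given `|x| ≤ t` is written as the integral over `{x : |x| ≤ t}`
divided by the probability of that event. -/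
theorem gaussian_truncated_moment_close :
    ∃ C : ℝ, 0 < C ∧
      ∀ (d : ℕ) (t : ℝ), 0 < d → 2 * Real.sqrt d + 1 ≤ t →
        |(∫ x in {x : ℝ | |x| ≤ t}, x ^ d ∂(gaussianReal 0 1)) /
            ((gaussianReal 0 1) {x : ℝ | |x| ≤ t}).toReal
          - ∫ x, x ^ d ∂(gaussianReal 0 1)| ≤ C * t ^ d * Real.exp (-(t ^ 2) / 2) := by
  refine ⟨48, by norm_num, ?_⟩
  intro d t hd ht
  set μ := gaussianReal 0 1 with hμ
  set S : Set ℝ := {x : ℝ | |x| ≤ t} with hSdef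
  have hSmeas : MeasurableSet S := measurableSet_le measurable_abs measurable_const
  have hsq : 1 ≤ Real.sqrt d := by
    rw [show (1:ℝ) = Real.sqrt 1 by simp]
    exact Real.sqrt_le_sqrt (by exact_mod_cast hd)
  have ht3 : 3 ≤ t := by linarith
  have ht1 : 1 ≤ t := by linarith
  have ht0 : (0:ℝ) < t := by linarith
  have htd : 4 * (d:ℝ) ≤ t ^ 2 := by
    have h := Real.sq_sqrt (by positivity : (0:ℝ) ≤ (d:ℝ))
    nlinarith [Real.sqrt_nonneg (d:ℝ)]
  set E := t ^ d * Real.exp (-t ^ 2 / 2) with hE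
  have hEpos : 0 < E := by positivity
  -- exponential smallness
  have hexp16 : Real.exp (-t ^ 2 / 2) ≤ 1 / 16 := by
    have h2 : Real.exp 1 ^ 4 = Real.exp 4 := by
      rw [← Real.exp_nat_mul]; norm_num
    have h3 : Real.exp (9 / 2) = Real.exp 4 * Real.exp (1 / 2) := by
      rw [← Real.exp_add]; norm_num
    have h4 : (2.7:ℝ) ^ 4 ≤ Real.exp 1 ^ 4 := by
      apply pow_le_pow_left₀ (by norm_num)
      nlinarith [Real.exp_one_gt_d9]
    have h5 : (16:ℝ) ≤ Real.exp (9 / 2) := by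
      have h6 : (1:ℝ) ≤ Real.exp (1 / 2) := Real.one_le_exp (by norm_num)
      nlinarith [Real.exp_pos 4]
    have h7 : Real.exp (-t ^ 2 / 2) ≤ Real.exp (-(9 / 2)) :=
      Real.exp_le_exp.mpr (by nlinarith)
    rw [Real.exp_neg] at h7
    have h8 : (Real.exp (9 / 2))⁻¹ ≤ 1 / 16 := by
      rw [inv_le_comm₀ (Real.exp_pos _) (by norm_num)]
      linarith
    linarith
  -- tail bound under μ
  have key : ∀ k : ℕ, 4 * (k:ℝ) ≤ t ^ 2 →
      ∫ x in Sᶜ, |x| ^ k ∂μ ≤ 8 * (t ^ k * Real.exp (-t ^ 2 / 2)) := by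
    intro k hk
    have hScm : MeasurableSet Sᶜ := hSmeas.compl
    rw [hμ, my_conv _ hScm]
    have hptw : ∀ x ∈ Sᶜ, gaussianPDFReal 0 1 x * |x| ^ k
        ≤ |x| ^ k * Real.exp (-x ^ 2 / 2) := by
      intro x _
      rw [my_gpdf_eq]
      have h1 : (Real.sqrt (2 * Real.pi))⁻¹ * Real.exp (-x ^ 2 / 2)
          ≤ Real.exp (-x ^ 2 / 2) :=
        mul_le_of_le_one_left (Real.exp_pos _).le my_K_le_one
      calc (Real.sqrt (2 * Real.pi))⁻¹ * Real.exp (-x ^ 2 / 2) * |x| ^ k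
          ≤ Real.exp (-x ^ 2 / 2) * |x| ^ k :=
            mul_le_mul_of_nonneg_right h1 (by positivity)
        _ = |x| ^ k * Real.exp (-x ^ 2 / 2) := by ring
    have hint1 : IntegrableOn (fun x => gaussianPDFReal 0 1 x * |x| ^ k) Sᶜ := by
      have heq : (fun x : ℝ => gaussianPDFReal 0 1 x * |x| ^ k)
          = fun x : ℝ => (Real.sqrt (2 * Real.pi))⁻¹ * (|x| ^ k * Real.exp (-x ^ 2 / 2)) := by
        funext x; rw [my_gpdf_eq]; ring
      rw [heq]
      exact ((my_int_abs_pow_gauss k).const_mul _).integrableOn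
    have hstep := setIntegral_mono_on hint1 (my_int_abs_pow_gauss k).integrableOn hScm hptw
    have hSc : Sᶜ = {x : ℝ | t < |x|} := by
      ext x; simp [hSdef, not_le]
    rw [hSc] at hstep
    rw [hSc]
    exact le_trans hstep (my_tail k t ht1 hk)
  -- probabilities
  set p := (μ S).toReal with hp_def
  set q := (μ Sᶜ).toReal with hq_def
  have hqnn : 0 ≤ q := ENNReal.toReal_nonneg
  have hq8 : q ≤ 8 * Real.exp (-t ^ 2 / 2) := by
    have h0 := key 0 (by norm_num; positivity)
    simp only [pow_zero] at h0
    rw [setIntegral_const] at h0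
    simp at h0; exact h0
  have hpq : p + q = 1 := by
    have h1 : (∫ _x in S, (1:ℝ) ∂μ) + ∫ _x in Sᶜ, (1:ℝ) ∂μ = ∫ _x, (1:ℝ) ∂μ :=
      integral_add_compl hSmeas (integrable_const 1)
    rw [setIntegral_const, setIntegral_const, integral_const, probReal_univ] at h1
    simp at h1; exact h1
  have hq12 : q ≤ 1 / 2 := by linarith
  have hp12 : 1 / 2 ≤ p := by linarith
  -- integrals
  set I := ∫ x in S, x ^ d ∂μ with hI_def
  set R := ∫ x in Sᶜ, x ^ d ∂μ with hR_def
  set M := ∫ x, x ^ d ∂μ with hM_def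
  have hIRM : I + R = M := integral_add_compl hSmeas (my_int_mu d)
  have hIabs : |I| ≤ t ^ d := by
    have h1 : ‖∫ x in S, x ^ d ∂μ‖ ≤ t ^ d * (μ S).toReal := by
      apply norm_setIntegral_le_of_norm_le_const (measure_lt_top μ S)
      intro x hx
      rw [Real.norm_eq_abs, abs_pow]
      exact pow_le_pow_left₀ (abs_nonneg x) hx d
    rw [Real.norm_eq_abs] at h1
    have hp1 : p ≤ 1 := by linarith
    calc |I| ≤ t ^ d * p := h1
      _ ≤ t ^ d * 1 := mul_le_mul_of_nonneg_left hp1 (by positivity)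
      _ = t ^ d := mul_one _
  have hRabs : |R| ≤ 8 * E := by
    have h1 : ‖∫ x in Sᶜ, x ^ d ∂μ‖ ≤ ∫ x in Sᶜ, ‖x ^ d‖ ∂μ :=
      norm_integral_le_integral_norm _
    have h2 : (∫ x in Sᶜ, ‖x ^ d‖ ∂μ) = ∫ x in Sᶜ, |x| ^ d ∂μ := by
      congr 1; funext x; rw [Real.norm_eq_abs, abs_pow]
    rw [Real.norm_eq_abs, h2] at h1
    exact le_trans h1 (key d htd)
  have hMabs : |M| ≤ t ^ d + 8 * E := by
    rw [← hIRM]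
    calc |I + R| ≤ |I| + |R| := abs_add_le _ _
      _ ≤ t ^ d + 8 * E := add_le_add hIabs hRabs
  -- final computation
  have hppos : (0:ℝ) < p := by linarith
  have hnum : |I - p * M| ≤ 24 * E := by
    have hsplit : I - p * M = q * M - R := by
      have hq1 : q = 1 - p := by linarith
      rw [hq1, ← hIRM]; ring
    rw [hsplit]
    have h1 : |q * M - R| ≤ |q * M| + |R| := abs_sub _ _
    have h2 : |q * M| = q * |M| := by rw [abs_mul, abs_of_nonneg hqnn]
    have h3 : q * |M| ≤ (8 * Real.exp (-t ^ 2 / 2)) * (t ^ d + 8 * E) :=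
      mul_le_mul hq8 hMabs (abs_nonneg M) (by positivity)
    have h4 : Real.exp (-t ^ 2 / 2) * E ≤ (1 / 16) * E :=
      mul_le_mul_of_nonneg_right hexp16 hEpos.le
    have h5 : (8 * Real.exp (-t ^ 2 / 2)) * (t ^ d + 8 * E)
        = 8 * E + 64 * (Real.exp (-t ^ 2 / 2) * E) := by
      rw [hE]; ring
    rw [h2] at h1
    linarith [hRabs]
  have hgoal : |I / p - M| ≤ 48 * t ^ d * Real.exp (-(t ^ 2) / 2) := by
    have hIp : I / p - M = (I - p * M) / p := by field_simp
    rw [hIp, abs_div, abs_of_pos hppos, div_le_iff₀ hppos]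
    have h6 := mul_le_mul_of_nonneg_left hp12 (show (0:ℝ) ≤ 48 * E from by positivity)
    have h7 : 48 * t ^ d * Real.exp (-(t ^ 2) / 2) * p = 48 * E * p := by
      rw [hE]; ring
    rw [h7]
    linarith [hnum, h6]
  exact hgoal
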